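/- Let 1 ≤ q < p < ∞ and let Γ₁, Γ₂ be arbitrary index sets. Then every bounded linear operator T : ℓ_p(Γ₁) → ℓ_q(Γ₂) is compact. -/

import Mathlib

open scoped ENNReal
open Filter Topology
set_option linter.unusedSectionVars false

namespace PittAux

variable {𝕜 : Type*} [RCLike 𝕜] {Γ : Type*} [DecidableEq Γ] {p : ℝ≥0∞} [Fact (1 ≤ p)]

local notation "ℓ" => lp (fun _ : Γ => 𝕜) p

/-- Truncation of `x` to a finite set `s`. -/
noncomputable def trunc (s : Finset Γ) (x : lp (fun _ : Γ => 𝕜) p) : lp (fun _ : Γ => 𝕜) p :=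
  ∑ i ∈ s, lp.single p i (x i)

theorem trunc_apply (s : Finset Γ) (x : lp (fun _ : Γ => 𝕜) p) (j : Γ) :
    trunc s x j = if j ∈ s then x j else 0 := by
  simp only [trunc, lp.coeFn_sum, Finset.sum_apply, lp.single_apply, Finset.sum_dite_eq, Pi.single_apply,
    Finset.sum_ite_eq]

theorem norm_trunc_rpow (hp : 0 < p.toReal) (s : Finset Γ) (x : lp (fun _ : Γ => 𝕜) p) :
    ‖trunc s x‖ ^ p.toReal = ∑ i ∈ s, ‖x i‖ ^ p.toReal :=
  lp.norm_sum_single hp _ s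

theorem norm_sub_trunc_rpow (hp : 0 < p.toReal) (s : Finset Γ) (x : lp (fun _ : Γ => 𝕜) p) :
    ‖x - trunc s x‖ ^ p.toReal = ‖x‖ ^ p.toReal - ∑ i ∈ s, ‖x i‖ ^ p.toReal :=
  lp.norm_compl_sum_single hp x s

/-- helper: cancel rpow -/
theorem le_of_rpow_le {a b r : ℝ} (ha : 0 ≤ a) (hr : 0 < r) (h : a ^ r ≤ b ^ r)
    (hb : 0 ≤ b) : a ≤ b :=
  (Real.rpow_le_rpow_iff ha hb hr).mp h

theorem norm_trunc_le (hp : 0 < p.toReal) (s : Finset Γ) (x : lp (fun _ : Γ => 𝕜) p) :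
    ‖trunc s x‖ ≤ ‖x‖ := by
  refine le_of_rpow_le (norm_nonneg _) hp ?_ (norm_nonneg _)
  rw [norm_trunc_rpow hp]
  exact lp.sum_rpow_le_norm_rpow hp x s

theorem norm_sub_trunc_le (hp : 0 < p.toReal) (s : Finset Γ) (x : lp (fun _ : Γ => 𝕜) p) :
    ‖x - trunc s x‖ ≤ ‖x‖ := by
  refine le_of_rpow_le (norm_nonneg _) hp ?_ (norm_nonneg _)
  rw [norm_sub_trunc_rpow hp]
  have : 0 ≤ ∑ i ∈ s, ‖x i‖ ^ p.toReal :=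
    Finset.sum_nonneg fun i _ => Real.rpow_nonneg (norm_nonneg _) _
  linarith

theorem norm_sub_trunc_mono (hp : 0 < p.toReal) {s t : Finset Γ} (hst : s ⊆ t)
    (x : lp (fun _ : Γ => 𝕜) p) : ‖x - trunc t x‖ ≤ ‖x - trunc s x‖ := by
  refine le_of_rpow_le (norm_nonneg _) hp ?_ (norm_nonneg _)
  rw [norm_sub_trunc_rpow hp, norm_sub_trunc_rpow hp]
  have := Finset.sum_le_sum_of_subset_of_nonneg hst
    (fun i _ _ => Real.rpow_nonneg (norm_nonneg (x i)) p.toReal)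
  linarith

theorem exists_trunc_tail (hp' : p ≠ ⊤) (x : lp (fun _ : Γ => 𝕜) p) {δ : ℝ} (hδ : 0 < δ) :
    ∃ s : Finset Γ, ‖x - trunc s x‖ ≤ δ := by
  have h := lp.hasSum_single hp' x
  rw [HasSum, SummationFilter.unconditional_filter, Metric.tendsto_atTop] at h
  obtain ⟨s, hs⟩ := h δ hδ
  refine ⟨s, ?_⟩
  have := hs s le_rfl
  rw [dist_eq_norm] at this
  rw [show x - trunc s x = -((∑ i ∈ s, lp.single p i (x i)) - x) by simp [trunc]]
  rw [norm_neg]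
  exact this.le

theorem trunc_sdiff_eq (s t : Finset Γ) (x : lp (fun _ : Γ => 𝕜) p)
    (hx : ∀ i ∈ t, x i = 0) : trunc (s \ t) x = trunc s x := by
  refine lp.ext (funext fun j => ?_)
  rw [trunc_apply, trunc_apply]
  by_cases hj : j ∈ s
  · by_cases hjt : j ∈ t
    · simp [hj, hjt, hx j hjt, Finset.mem_sdiff]
    · simp [hj, hjt, Finset.mem_sdiff]
  · simp [hj, Finset.mem_sdiff]

theorem trunc_union (s t : Finset Γ) (h : Disjoint s t) (x : lp (fun _ : Γ => 𝕜) p) :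
    trunc (s ∪ t) x = trunc s x + trunc t x := by
  simp only [trunc]
  rw [Finset.sum_union h]


variable {𝕜 : Type*} [RCLike 𝕜] {Γ : Type*} [DecidableEq Γ] {p : ℝ≥0∞} [Fact (1 ≤ p)]

/-- pointwise: norm-rpow of a sum with at most one nonzero term -/
theorem norm_sum_rpow_of_subsingleton {ι : Type*} {r : ℝ} (hr : 0 < r) (s : Finset ι)
    (a : ι → 𝕜) (h : ∀ j ∈ s, ∀ k ∈ s, a j ≠ 0 → a k ≠ 0 → j = k) :
    ‖∑ j ∈ s, a j‖ ^ r = ∑ j ∈ s, ‖a j‖ ^ r := by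
  by_cases hz : ∀ j ∈ s, a j = 0
  · rw [Finset.sum_eq_zero hz, Finset.sum_eq_zero]
    · simp [Real.zero_rpow hr.ne']
    · intro j hj; rw [hz j hj]; simp [Real.zero_rpow hr.ne']
  · push_neg at hz
    obtain ⟨j₀, hj₀, hj₀ne⟩ := hz
    rw [Finset.sum_eq_single_of_mem j₀ hj₀, Finset.sum_eq_single_of_mem j₀ hj₀]
    · intro k hk hkne
      by_cases hak : a k = 0
      · simp [hak, Real.zero_rpow hr.ne']
      · exact absurd (h k hk j₀ hj₀ hak hj₀ne) hkne
    · intro k hk hkne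
      by_cases hak : a k = 0
      · simp [hak]
      · exact absurd (h k hk j₀ hj₀ hak hj₀ne) hkne

/-- norm of a sum of disjointly supported lp elements -/
theorem norm_sum_disjoint_rpow (hp : 0 < p.toReal) {ι : Type*} (s : Finset ι)
    (v : ι → lp (fun _ : Γ => 𝕜) p) (G : ι → Finset Γ)
    (hsupp : ∀ j ∈ s, ∀ i, i ∉ G j → v j i = 0)
    (hdisj : ∀ j ∈ s, ∀ k ∈ s, j ≠ k → Disjoint (G j) (G k)) :
    ‖∑ j ∈ s, v j‖ ^ p.toReal = ∑ j ∈ s, ‖v j‖ ^ p.toReal := by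
  rw [lp.norm_rpow_eq_tsum hp]
  have hpt : ∀ i : Γ, ‖(∑ j ∈ s, v j : lp (fun _ : Γ => 𝕜) p) i‖ ^ p.toReal
      = ∑ j ∈ s, ‖v j i‖ ^ p.toReal := by
    intro i
    have hcoe : (∑ j ∈ s, v j : lp (fun _ : Γ => 𝕜) p) i = ∑ j ∈ s, v j i := by
      rw [lp.coeFn_sum]; simp
    rw [hcoe]
    refine norm_sum_rpow_of_subsingleton hp s _ ?_
    intro j hj k hk hjne hkne
    by_contra hne
    have hij : i ∈ G j := by by_contra hi; exact hjne (hsupp j hj i hi)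
    have hik : i ∈ G k := by by_contra hi; exact hkne (hsupp k hk i hi)
    exact Finset.disjoint_left.mp (hdisj j hj k hk hne) hij hik
  rw [tsum_congr hpt, Summable.tsum_finsetSum]
  · exact Finset.sum_congr rfl fun j _ => (lp.norm_rpow_eq_tsum hp (v j)).symm
  · intro j _
    exact ((lp.memℓp (v j)).summable hp)



variable {𝕜 : Type*} [RCLike 𝕜] {Γ : Type*} [DecidableEq Γ] {p : ℝ≥0∞} [Fact (1 ≤ p)]


theorem sum_norm_apply_le (hp : 0 < p.toReal) (f : lp (fun _ : Γ => 𝕜) p →L[𝕜] 𝕜)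
    {ι : Type*} (K : Finset ι) (v : ι → lp (fun _ : Γ => 𝕜) p) (G : ι → Finset Γ)
    (hsupp : ∀ j, ∀ i, i ∉ G j → v j i = 0)
    (hdisj : ∀ j k, j ≠ k → Disjoint (G j) (G k))
    (hnorm : ∀ j, ‖v j‖ ≤ 1) :
    ∑ j ∈ K, ‖f (v j)‖ ≤ ‖f‖ * (K.card : ℝ) ^ (1 / p.toReal) := by
  classical
  set c : ι → 𝕜 := fun j =>
    if f (v j) = 0 then 0 else (starRingEnd 𝕜) (f (v j)) / (‖f (v j)‖ : 𝕜) with hc_def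
  have hc : ∀ j, ‖c j‖ ≤ 1 := by
    intro j
    by_cases h : f (v j) = 0
    · simp [hc_def, h]
    · simp only [hc_def, if_neg h]
      rw [norm_div, RCLike.norm_conj, RCLike.norm_ofReal, abs_of_nonneg (norm_nonneg _)]
      rw [div_self (by simpa using h)]
  have hcz : ∀ j, c j * f (v j) = (‖f (v j)‖ : 𝕜) := by
    intro j
    by_cases h : f (v j) = 0
    · simp [hc_def, h]
    · simp only [hc_def, if_neg h]
      rw [div_mul_eq_mul_div, RCLike.conj_mul]
      rw [show ((‖f (v j)‖ : ℝ) : 𝕜) ^ 2 = (‖f (v j)‖ : 𝕜) * (‖f (v j)‖ : 𝕜) by ring]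
      rw [mul_div_assoc, div_self (by simpa using h), mul_one]
  set w : lp (fun _ : Γ => 𝕜) p := ∑ j ∈ K, c j • v j with hw_def
  have hfw : f w = ((∑ j ∈ K, ‖f (v j)‖ : ℝ) : 𝕜) := by
    rw [hw_def, map_sum]
    push_cast
    refine Finset.sum_congr rfl fun j _ => ?_
    rw [map_smul, smul_eq_mul, hcz j]
  have h1 : ∑ j ∈ K, ‖f (v j)‖ = ‖f w‖ := by
    rw [hfw, RCLike.norm_ofReal, abs_of_nonneg (Finset.sum_nonneg fun j _ => norm_nonneg _)]
  have hwnorm : ‖w‖ ≤ (K.card : ℝ) ^ (1 / p.toReal) := by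
    have h3 : ‖w‖ ^ p.toReal = ∑ j ∈ K, ‖c j • v j‖ ^ p.toReal := by
      refine norm_sum_disjoint_rpow hp K _ G ?_ ?_
      · intro j _ i hi
        have : (c j • v j : lp (fun _ : Γ => 𝕜) p) i = c j • v j i := by
          rw [lp.coeFn_smul]; rfl
        rw [this, hsupp j i hi, smul_zero]
      · exact fun j _ k _ hjk => hdisj j k hjk
    have h4 : ‖w‖ ^ p.toReal ≤ (K.card : ℝ) := by
      rw [h3]
      calc ∑ j ∈ K, ‖c j • v j‖ ^ p.toReal ≤ ∑ j ∈ K, 1 := by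
            refine Finset.sum_le_sum fun j _ => ?_
            refine Real.rpow_le_one (norm_nonneg _) ?_ hp.le
            rw [norm_smul]
            exact mul_le_one₀ (hc j) (norm_nonneg _) (hnorm j)
        _ = (K.card : ℝ) := by simp
    have := Real.rpow_le_rpow (Real.rpow_nonneg (norm_nonneg w) _) h4
      (le_of_lt (by positivity : (0:ℝ) < 1 / p.toReal))
    rwa [one_div, Real.rpow_rpow_inv (norm_nonneg w) hp.ne', ← one_div] at this
  calc ∑ j ∈ K, ‖f (v j)‖ = ‖f w‖ := h1
    _ ≤ ‖f‖ * ‖w‖ := f.le_opNorm w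
    _ ≤ ‖f‖ * (K.card : ℝ) ^ (1 / p.toReal) :=
        mul_le_mul_of_nonneg_left hwnorm (norm_nonneg f)

theorem tendsto_apply_zero (hp1 : 1 < p.toReal) (f : lp (fun _ : Γ => 𝕜) p →L[𝕜] 𝕜)
    (v : ℕ → lp (fun _ : Γ => 𝕜) p) (G : ℕ → Finset Γ)
    (hsupp : ∀ j, ∀ i, i ∉ G j → v j i = 0)
    (hdisj : ∀ j k, j ≠ k → Disjoint (G j) (G k))
    (hnorm : ∀ j, ‖v j‖ ≤ 1) :
    Tendsto (fun j => f (v j)) atTop (𝓝 0) := by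
  have hp : 0 < p.toReal := lt_trans one_pos hp1
  rw [← Nat.cofinite_eq_atTop, NormedAddCommGroup.tendsto_nhds_zero]
  intro ε hε
  rw [eventually_cofinite]
  by_contra hinf
  have hS : {j : ℕ | ¬ ‖f (v j)‖ < ε}.Infinite := hinf
  -- find n with ‖f‖ * n ^ (1/P) < n * ε
  have hθ : (0:ℝ) < 1 - 1 / p.toReal := by
    have : 1 / p.toReal < 1 := by
      rw [div_lt_one hp]; exact hp1
    linarith
  have htend : Tendsto (fun n : ℕ => ((n:ℝ)) ^ (1 - 1 / p.toReal)) atTop atTop :=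
    (tendsto_rpow_atTop hθ).comp tendsto_natCast_atTop_atTop
  obtain ⟨n, hn1, hnθ⟩ : ∃ n : ℕ, 1 ≤ n ∧ ‖f‖ / ε < (n:ℝ) ^ (1 - 1 / p.toReal) := by
    have h1 := htend.eventually_gt_atTop (‖f‖ / ε)
    have h2 : ∀ᶠ n : ℕ in atTop, 1 ≤ n := eventually_ge_atTop 1
    obtain ⟨n, hn2, hn1⟩ := (h1.and h2).exists
    exact ⟨n, hn1, hn2⟩
  have hn0 : (0:ℝ) < n := by exact_mod_cast hn1
  have hkey : ‖f‖ * (n:ℝ) ^ (1 / p.toReal) < n * ε := by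
    have hf : ‖f‖ < (n:ℝ) ^ (1 - 1 / p.toReal) * ε := by
      rw [div_lt_iff₀ hε] at hnθ; exact hnθ
    calc ‖f‖ * (n:ℝ) ^ (1 / p.toReal)
        < ((n:ℝ) ^ (1 - 1 / p.toReal) * ε) * (n:ℝ) ^ (1 / p.toReal) :=
          mul_lt_mul_of_pos_right hf (Real.rpow_pos_of_pos hn0 _)
      _ = ((n:ℝ) ^ (1 - 1 / p.toReal) * (n:ℝ) ^ (1 / p.toReal)) * ε := by ring
      _ = (n : ℝ) * ε := by
          rw [← Real.rpow_add hn0]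
          norm_num
  obtain ⟨K, hKS, hKcard⟩ := hS.exists_subset_card_eq n
  have hlow : (n:ℝ) * ε ≤ ∑ j ∈ K, ‖f (v j)‖ := by
    calc (n:ℝ) * ε = ∑ _j ∈ K, ε := by rw [Finset.sum_const, hKcard]; ring
      _ ≤ ∑ j ∈ K, ‖f (v j)‖ := by
          refine Finset.sum_le_sum fun j hj => ?_
          have := hKS hj
          simp only [Set.mem_setOf_eq, not_lt] at this
          exact this
  have hup := sum_norm_apply_le hp f K v G hsupp hdisj hnorm
  rw [hKcard] at hup
  linarith



variable {𝕜 : Type*} [RCLike 𝕜] {Γ : Type*} [DecidableEq Γ] {p : ℝ≥0∞} [Fact (1 ≤ p)]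

/-- coordinate evaluation as a continuous linear functional -/
noncomputable def coord (γ : Γ) : lp (fun _ : Γ => 𝕜) p →L[𝕜] 𝕜 :=
  LinearMap.mkContinuous
    { toFun := fun x => x γ
      map_add' := fun x y => by simp [lp.coeFn_add]
      map_smul' := fun c x => by simp [lp.coeFn_smul] }
    1 (fun x => by
      rw [one_mul]
      exact lp.norm_apply_le_norm (zero_lt_one.trans_le (Fact.out : 1 ≤ p)).ne' x γ)

@[simp] theorem coord_apply (γ : Γ) (x : lp (fun _ : Γ => 𝕜) p) : coord γ x = x γ := rfl

theorem helper_le_rpow {a b r : ℝ} (ha : 0 ≤ a) (hr : 0 < r) (h : a ^ r ≤ b) :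
    a ≤ b ^ (1 / r) := by
  have := Real.rpow_le_rpow (Real.rpow_nonneg ha r) h
    (le_of_lt (by positivity : (0:ℝ) < 1 / r))
  rwa [one_div, Real.rpow_rpow_inv ha hr.ne', ← one_div] at this

theorem helper_rpow_le {a b r : ℝ} (ha : 0 ≤ a) (hb : 0 ≤ b) (hr : 0 < r) (h : b ≤ a ^ r) :
    b ^ (1 / r) ≤ a := by
  have := Real.rpow_le_rpow hb h (le_of_lt (by positivity : (0:ℝ) < 1 / r))
  rwa [one_div, Real.rpow_rpow_inv ha hr.ne', ← one_div] at this

theorem tendsto_norm_trunc (hp : 0 < p.toReal) (H : Finset Γ) (y : ℕ → lp (fun _ : Γ => 𝕜) p)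
    (hy : ∀ γ : Γ, Tendsto (fun k => y k γ) atTop (𝓝 0)) :
    Tendsto (fun k => ‖trunc H (y k)‖) atTop (𝓝 0) := by
  have hsum : Tendsto (fun k => ∑ γ ∈ H, ‖y k γ‖ ^ p.toReal) atTop (𝓝 0) := by
    have : Tendsto (fun k => ∑ γ ∈ H, ‖y k γ‖ ^ p.toReal) atTop
        (𝓝 (∑ γ ∈ H, (0:ℝ))) := by
      refine tendsto_finset_sum H fun γ _ => ?_
      have h1 : Tendsto (fun k => ‖y k γ‖) atTop (𝓝 0) := by
        simpa using (hy γ).norm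
      have h2 := h1.rpow_const (p := p.toReal) (Or.inr hp.le)
      rwa [Real.zero_rpow hp.ne'] at h2
    simpa using this
  have h3 := hsum.rpow_const (p := 1 / p.toReal) (Or.inr (by positivity))
  rw [Real.zero_rpow (by positivity : 1 / p.toReal ≠ 0)] at h3
  refine h3.congr fun k => ?_
  rw [← norm_trunc_rpow hp, one_div, Real.rpow_rpow_inv (norm_nonneg _) hp.ne']


section Key

variable {Γ₁ Γ₂ : Type*} [DecidableEq Γ₁] [DecidableEq Γ₂]
  {q : ℝ≥0∞} [Fact (1 ≤ q)]

set_option maxHeartbeats 2000000 in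
theorem key (hqp : q < p) (hp' : p ≠ ⊤)
    (T : lp (fun _ : Γ₁ => 𝕜) p →L[𝕜] lp (fun _ : Γ₂ => 𝕜) q)
    {ε : ℝ} (hε : 0 < ε) :
    ∃ F : Finset Γ₁, ∀ x : lp (fun _ : Γ₁ => 𝕜) p,
      ‖x‖ ≤ 1 → (∀ i ∈ F, x i = 0) → ‖T x‖ ≤ ε := by
  by_contra hcon
  push_neg at hcon
  choose X hX1 hX2 hX3 using hcon
  have hq' : q ≠ ⊤ := ne_top_of_lt hqp
  have hq0 : q ≠ 0 := (zero_lt_one.trans_le (Fact.out : 1 ≤ q)).ne'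
  have hp0 : p ≠ 0 := (zero_lt_one.trans_le (Fact.out : 1 ≤ p)).ne'
  have hQ : 0 < q.toReal := ENNReal.toReal_pos hq0 hq'
  have hP : 0 < p.toReal := ENNReal.toReal_pos hp0 hp'
  have hQP : q.toReal < p.toReal := (ENNReal.toReal_lt_toReal hq' hp').mpr hqp
  have hQ1 : 1 ≤ q.toReal := by
    have := ENNReal.toReal_mono hq' (Fact.out : 1 ≤ q)
    simpa using this
  have hP1 : 1 < p.toReal := lt_of_le_of_lt hQ1 hQP
  set C := ‖T‖ with hC
  have hC0 : (0:ℝ) ≤ C := norm_nonneg _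
  set δdom : ℝ := ε / (2 * (C + 1)) with hδdom
  have hδdom0 : 0 < δdom := by positivity
  choose tailD htailD using fun x : lp (fun _ : Γ₁ => 𝕜) p =>
    exists_trunc_tail hp' x hδdom0
  set step : Finset Γ₁ → Finset Γ₁ := fun F => F ∪ tailD (X F) with hstep
  set Fse : ℕ → Finset Γ₁ := fun k => step^[k] ∅ with hFse
  have hFsucc : ∀ k, Fse (k+1) = Fse k ∪ tailD (X (Fse k)) := by
    intro k
    rw [hFse]
    simp only []
    rw [Function.iterate_succ_apply', hstep]
  have hFmono : Monotone Fse := monotone_nat_of_le_succ fun k => by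
    rw [hFsucc k]; exact Finset.subset_union_left
  set G : ℕ → Finset Γ₁ := fun k => tailD (X (Fse k)) \ Fse k with hG
  set u : ℕ → lp (fun _ : Γ₁ => 𝕜) p := fun k => trunc (G k) (X (Fse k)) with hu
  have hu_eq : ∀ k, u k = trunc (tailD (X (Fse k))) (X (Fse k)) := fun k =>
    trunc_sdiff_eq _ _ _ (hX2 (Fse k))
  have hGF : ∀ k, G k ⊆ Fse (k+1) := fun k => by
    rw [hFsucc k, hG]
    exact Finset.sdiff_subset.trans Finset.subset_union_right
  have hGdisjF : ∀ k, Disjoint (Fse k) (G k) := fun k => Finset.disjoint_sdiff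
  have hGdisj : ∀ j k, j ≠ k → Disjoint (G j) (G k) := by
    intro j k hjk
    rcases hjk.lt_or_gt with h | h
    · exact Finset.disjoint_of_subset_left
        ((hGF j).trans (hFmono (Nat.succ_le_of_lt h))) (hGdisjF k)
    · exact (Finset.disjoint_of_subset_left
        ((hGF k).trans (hFmono (Nat.succ_le_of_lt h))) (hGdisjF j)).symm
  have husupp : ∀ k, ∀ i, i ∉ G k → u k i = 0 := fun k i hi => by
    rw [hu]; rw [trunc_apply]; simp [hi]
  have hunorm : ∀ k, ‖u k‖ ≤ 1 := fun k => (norm_trunc_le hP _ _).trans (hX1 _)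
  have hTu : ∀ k, ε / 2 ≤ ‖T (u k)‖ := by
    intro k
    have hd : ‖X (Fse k) - u k‖ ≤ δdom := by rw [hu_eq]; exact htailD _
    have h1 : ‖T (X (Fse k)) - T (u k)‖ ≤ C * δdom := by
      rw [← map_sub]
      exact (T.le_opNorm _).trans (mul_le_mul_of_nonneg_left hd hC0)
    have h2 : C * δdom ≤ ε / 2 := by
      have ha : C * δdom ≤ (C + 1) * δdom := by nlinarith [hδdom0.le]
      have hb : (C + 1) * δdom = ε / 2 := by
        rw [hδdom]
        field_simp
      linarith
    have h3 := hX3 (Fse k)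
    have h4 : ‖T (X (Fse k))‖ - ‖T (u k)‖ ≤ C * δdom := (norm_sub_norm_le _ _).trans h1
    linarith
  set y : ℕ → lp (fun _ : Γ₂ => 𝕜) q := fun k => T (u k) with hy
  have hycoord : ∀ γ : Γ₂, Tendsto (fun k => y k γ) atTop (𝓝 0) := by
    intro γ
    have := tendsto_apply_zero hP1 ((coord γ).comp T) u G husupp hGdisj hunorm
    simpa [hy] using this
  have htrH : ∀ H : Finset Γ₂, Tendsto (fun k => ‖trunc H (y k)‖) atTop (𝓝 0) :=
    fun H => tendsto_norm_trunc hQ H y hycoord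
  set δr : ℕ → ℝ := fun j => ε / 8 * (1 / 2) ^ j with hδr
  have hδr0 : ∀ j, 0 < δr j := fun j => by rw [hδr]; positivity
  have hδrε : ∀ j, δr j ≤ ε / 8 := by
    intro j
    rw [hδr]
    have h1 : ((1:ℝ) / 2) ^ j ≤ 1 := pow_le_one₀ (by norm_num) (by norm_num)
    nlinarith [hε]
  have hpickE : ∀ (j : ℕ) (st : ℕ × Finset Γ₂),
      ∃ k, st.1 < k ∧ ‖trunc st.2 (y k)‖ ≤ δr j := by
    intro j st
    have h1 : ∀ᶠ k in atTop, ‖trunc st.2 (y k)‖ < δr j :=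
      (htrH st.2).eventually_lt_const (hδr0 j)
    obtain ⟨k, hk1, hk2⟩ := ((eventually_gt_atTop st.1).and h1).exists
    exact ⟨k, hk1, hk2.le⟩
  choose pick hpick1 hpick2 using hpickE
  choose tl htl using fun (j : ℕ) (z : lp (fun _ : Γ₂ => 𝕜) q) =>
    exists_trunc_tail hq' z (hδr0 j)
  set seq : ℕ → ℕ × Finset Γ₂ := fun j =>
    Nat.rec ((0 : ℕ), (∅ : Finset Γ₂))
      (fun j st => (pick j st, st.2 ∪ tl j (y (pick j st)))) j with hseq
  set m : ℕ → ℕ := fun j => (seq j).1 with hm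
  set A : ℕ → Finset Γ₂ := fun j => (seq j).2 with hA
  have hseqsucc : ∀ j, seq (j+1) = (pick j (seq j), (seq j).2 ∪ tl j (y (pick j (seq j)))) :=
    fun j => rfl
  have hmsucc : ∀ j, m (j+1) = pick j (seq j) := fun j => congrArg Prod.fst (hseqsucc j)
  have hAsucc : ∀ j, A (j+1) = A j ∪ tl j (y (m (j+1))) := fun j => by
    rw [hmsucc j]
  have hmlt : ∀ j, m j < m (j+1) := fun j => by
    rw [hmsucc j]; exact hpick1 j (seq j)
  have hmmono : StrictMono m := strictMono_nat_of_lt_succ hmlt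
  have hAsub : ∀ j, A j ⊆ A (j+1) := fun j => by
    rw [hAsucc j]; exact Finset.subset_union_left
  have hAmono : Monotone A := monotone_nat_of_le_succ hAsub
  have htr1 : ∀ j, ‖trunc (A j) (y (m (j+1)))‖ ≤ δr j := fun j => by
    rw [hmsucc j]; exact hpick2 j (seq j)
  have htr2 : ∀ j, ‖y (m (j+1)) - trunc (A (j+1)) (y (m (j+1)))‖ ≤ δr j := by
    intro j
    have h1 : tl j (y (m (j+1))) ⊆ A (j+1) := by
      rw [hAsucc j]; exact Finset.subset_union_right
    exact (norm_sub_trunc_mono hQ h1 _).trans (htl j _)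
  set w : ℕ → lp (fun _ : Γ₂ => 𝕜) q := fun j => trunc (A (j+1) \ A j) (y (m (j+1))) with hw
  have hwsupp : ∀ j, ∀ i, i ∉ A (j+1) \ A j → w j i = 0 := fun j i hi => by
    rw [hw]; rw [trunc_apply]; simp [hi]
  have hwdisj : ∀ j k, j ≠ k → Disjoint (A (j+1) \ A j) (A (k+1) \ A k) := by
    intro j k hjk
    rcases hjk.lt_or_gt with h | h
    · exact Finset.disjoint_of_subset_left
        (Finset.sdiff_subset.trans (hAmono (Nat.succ_le_of_lt h))) Finset.disjoint_sdiff
    · exact (Finset.disjoint_of_subset_left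
        (Finset.sdiff_subset.trans (hAmono (Nat.succ_le_of_lt h))) Finset.disjoint_sdiff).symm
  have hsplit : ∀ j, trunc (A (j+1)) (y (m (j+1)))
      = trunc (A j) (y (m (j+1))) + w j := by
    intro j
    rw [hw]
    rw [← trunc_union (A j) (A (j+1) \ A j) Finset.disjoint_sdiff,
      Finset.union_sdiff_of_subset (hAsub j)]
  have hrnorm : ∀ j, ‖y (m (j+1)) - w j‖ ≤ 2 * δr j := by
    intro j
    have heq : y (m (j+1)) - w j
        = (y (m (j+1)) - trunc (A (j+1)) (y (m (j+1)))) + trunc (A j) (y (m (j+1))) := by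
      rw [hsplit j]; abel
    rw [heq]
    calc ‖(y (m (j+1)) - trunc (A (j+1)) (y (m (j+1)))) + trunc (A j) (y (m (j+1)))‖
        ≤ ‖y (m (j+1)) - trunc (A (j+1)) (y (m (j+1)))‖ + ‖trunc (A j) (y (m (j+1)))‖ :=
          norm_add_le _ _
      _ ≤ δr j + δr j := add_le_add (htr2 j) (htr1 j)
      _ = 2 * δr j := by ring
  have hwlow : ∀ j, ε / 4 ≤ ‖w j‖ := by
    intro j
    have h1 := hTu (m (j+1))
    have h3 : ‖y (m (j+1))‖ - ‖w j‖ ≤ 2 * δr j := (norm_sub_norm_le _ _).trans (hrnorm j)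
    have h4 := hδrε j
    have h5 : ε / 2 ≤ ‖y (m (j+1))‖ := h1
    linarith
  -- choice of N
  set θ : ℝ := 1 / q.toReal - 1 / p.toReal with hθdef
  have hθ : 0 < θ := by
    rw [hθdef]
    have := one_div_lt_one_div_of_lt hQ hQP
    linarith
  obtain ⟨N, hN1, hNθ⟩ : ∃ N : ℕ, 1 ≤ N ∧ (C + ε/2) / (ε/4) < (N:ℝ) ^ θ := by
    have htend : Tendsto (fun n : ℕ => ((n:ℝ)) ^ θ) atTop atTop :=
      (tendsto_rpow_atTop hθ).comp tendsto_natCast_atTop_atTop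
    obtain ⟨n, hn2, hn1⟩ :=
      ((htend.eventually_gt_atTop ((C + ε/2) / (ε/4))).and (eventually_ge_atTop 1)).exists
    exact ⟨n, hn1, hn2⟩
  have hN0 : (0:ℝ) < N := by exact_mod_cast hN1
  set S : lp (fun _ : Γ₁ => 𝕜) p := ∑ j ∈ Finset.range N, u (m (j+1)) with hS
  have hSnorm : ‖S‖ ≤ (N:ℝ) ^ (1 / p.toReal) := by
    refine helper_le_rpow (norm_nonneg _) hP ?_
    rw [hS, norm_sum_disjoint_rpow hP (Finset.range N) _ (fun j => G (m (j+1)))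
      (fun j _ i hi => husupp _ i hi)
      (fun j _ k _ hjk => hGdisj _ _
        (fun hc => hjk (Nat.succ_injective (hmmono.injective hc))))]
    calc ∑ j ∈ Finset.range N, ‖u (m (j+1))‖ ^ p.toReal
        ≤ ∑ _j ∈ Finset.range N, (1:ℝ) :=
          Finset.sum_le_sum fun j _ =>
            Real.rpow_le_one (norm_nonneg _) (hunorm _) hP.le
      _ = (N:ℝ) := by simp
  have hTS1 : ‖T S‖ ≤ C * (N:ℝ) ^ (1 / p.toReal) :=
    (T.le_opNorm S).trans (mul_le_mul_of_nonneg_left hSnorm hC0)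
  have hTSsum : T S = ∑ j ∈ Finset.range N, y (m (j+1)) := by
    rw [hS, map_sum]
  have hwsum : (ε/4) * (N:ℝ) ^ (1 / q.toReal) ≤ ‖∑ j ∈ Finset.range N, w j‖ := by
    have h1 : ‖∑ j ∈ Finset.range N, w j‖ ^ q.toReal
        = ∑ j ∈ Finset.range N, ‖w j‖ ^ q.toReal :=
      norm_sum_disjoint_rpow hQ _ _ (fun j => A (j+1) \ A j)
        (fun j _ i hi => hwsupp j i hi) (fun j _ k _ hjk => hwdisj j k hjk)
    have h2 : (N:ℝ) * (ε/4) ^ q.toReal ≤ ‖∑ j ∈ Finset.range N, w j‖ ^ q.toReal := by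
      rw [h1]
      calc (N:ℝ) * (ε/4) ^ q.toReal = ∑ _j ∈ Finset.range N, (ε/4) ^ q.toReal := by
            rw [Finset.sum_const, Finset.card_range, nsmul_eq_mul]
        _ ≤ ∑ j ∈ Finset.range N, ‖w j‖ ^ q.toReal :=
            Finset.sum_le_sum fun j _ =>
              Real.rpow_le_rpow (by positivity) (hwlow j) hQ.le
    have h3 := helper_rpow_le (norm_nonneg _) (by positivity) hQ h2
    rw [Real.mul_rpow (by positivity) (by positivity)] at h3
    rw [show ((ε/4) ^ q.toReal) ^ (1 / q.toReal) = ε/4 by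
      rw [one_div, Real.rpow_rpow_inv (by positivity) hQ.ne']] at h3
    linarith [h3]
  have hres : ‖∑ j ∈ Finset.range N, (y (m (j+1)) - w j)‖ ≤ ε / 2 := by
    have hgeo : ∑ j ∈ Finset.range N, ((1:ℝ)/2) ^ j ≤ 2 := sum_geometric_two_le N
    calc ‖∑ j ∈ Finset.range N, (y (m (j+1)) - w j)‖
        ≤ ∑ j ∈ Finset.range N, ‖y (m (j+1)) - w j‖ := norm_sum_le _ _
      _ ≤ ∑ j ∈ Finset.range N, 2 * δr j := Finset.sum_le_sum fun j _ => hrnorm j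
      _ = (ε/4) * ∑ j ∈ Finset.range N, ((1:ℝ)/2) ^ j := by
          rw [Finset.mul_sum]
          refine Finset.sum_congr rfl fun j _ => ?_
          rw [hδr]
          ring
      _ ≤ (ε/4) * 2 := by nlinarith [hε]
      _ = ε / 2 := by ring
  have hTSlow : (ε/4) * (N:ℝ) ^ (1 / q.toReal) - ε/2 ≤ ‖T S‖ := by
    have hd : (∑ j ∈ Finset.range N, w j)
        = T S - ∑ j ∈ Finset.range N, (y (m (j+1)) - w j) := by
      rw [hTSsum, ← Finset.sum_sub_distrib]
      refine Finset.sum_congr rfl fun j _ => ?_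
      abel
    have h5 : ‖∑ j ∈ Finset.range N, w j‖
        ≤ ‖T S‖ + ‖∑ j ∈ Finset.range N, (y (m (j+1)) - w j)‖ := by
      rw [hd]; exact norm_sub_le _ _
    linarith [hwsum, hres]
  have hNP1 : (1:ℝ) ≤ (N:ℝ) ^ (1 / p.toReal) := by
    have h0 : (1:ℝ) ≤ (N:ℝ) := by exact_mod_cast hN1
    have := Real.rpow_le_rpow (le_of_lt one_pos) h0
      (by positivity : (0:ℝ) ≤ 1 / p.toReal)
    rwa [Real.one_rpow] at this
  have hsplitN : (N:ℝ) ^ (1 / q.toReal) = (N:ℝ) ^ θ * (N:ℝ) ^ (1 / p.toReal) := by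
    rw [← Real.rpow_add hN0, hθdef]
    ring_nf
  have hbig : C * (N:ℝ) ^ (1 / p.toReal) + ε/2 < (ε/4) * (N:ℝ) ^ (1 / q.toReal) := by
    have h1 : C + ε/2 < (ε/4) * (N:ℝ) ^ θ := by
      rw [div_lt_iff₀ (by positivity : (0:ℝ) < ε/4)] at hNθ
      linarith
    calc C * (N:ℝ) ^ (1 / p.toReal) + ε/2
        ≤ (C + ε/2) * (N:ℝ) ^ (1 / p.toReal) := by nlinarith [hNP1, hC0, hε]
      _ < ((ε/4) * (N:ℝ) ^ θ) * (N:ℝ) ^ (1 / p.toReal) :=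
          mul_lt_mul_of_pos_right h1 (by positivity)
      _ = (ε/4) * (N:ℝ) ^ (1 / q.toReal) := by rw [hsplitN]; ring
  linarith [hTS1, hTSlow, hbig]

end Key

end PittAux

set_option maxHeartbeats 1000000 in
/-- Pitt's theorem for arbitrary index sets: if `1 ≤ q < p < ∞`, every
bounded linear operator `T : ℓ_p(Γ₁) → ℓ_q(Γ₂)` is compact. -/
theorem pitt_general_index {𝕜 : Type*} [RCLike 𝕜] (p q : ℝ≥0∞)
    [Fact (1 ≤ p)] [Fact (1 ≤ q)] (hqp : q < p) (hp' : p ≠ ⊤)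
    (Γ₁ Γ₂ : Type*)
    (T : lp (fun _ : Γ₁ => 𝕜) p →L[𝕜] lp (fun _ : Γ₂ => 𝕜) q) :
    IsCompactOperator T := by
  letI : DecidableEq Γ₁ := Classical.decEq Γ₁
  letI : DecidableEq Γ₂ := Classical.decEq Γ₂
  have hp0 : p ≠ 0 := (zero_lt_one.trans_le (Fact.out : 1 ≤ p)).ne'
  have hP : 0 < p.toReal := ENNReal.toReal_pos hp0 hp'
  have htb : TotallyBounded (⇑T '' Metric.closedBall 0 1) := by
    rw [Metric.totallyBounded_iff]
    intro ε hε
    obtain ⟨F, hF⟩ := PittAux.key hqp hp' T (half_pos hε)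
    set e : Γ₁ → lp (fun _ : Γ₁ => 𝕜) p := fun i => lp.single p i 1 with he
    set φlin : ({ i // i ∈ F } → 𝕜) →ₗ[𝕜] lp (fun _ : Γ₁ => 𝕜) p :=
      { toFun := fun c => ∑ i ∈ F.attach, c i • e i
        map_add' := fun c d => by simp [add_smul, Finset.sum_add_distrib]
        map_smul' := fun a c => by simp [smul_smul, Finset.smul_sum] } with hφlin
    have hφcont : Continuous φlin := φlin.continuous_of_finiteDimensional
    set K : Set ({ i // i ∈ F } → 𝕜) := Metric.closedBall 0 1 with hK_def
    have hK : IsCompact K := isCompact_closedBall _ _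
    have hC : IsCompact ((fun c => T (φlin c)) '' K) :=
      hK.image (T.continuous.comp hφcont)
    obtain ⟨t, htf, htsub⟩ :=
      Metric.totallyBounded_iff.mp hC.totallyBounded (ε/2) (half_pos hε)
    refine ⟨t, htf, ?_⟩
    rintro _ ⟨x, hx, rfl⟩
    have hx1 : ‖x‖ ≤ 1 := by rwa [Metric.mem_closedBall, dist_zero_right] at hx
    set c : { i // i ∈ F } → 𝕜 := fun i => x i with hc_def
    have hcK : c ∈ K := by
      rw [hK_def, Metric.mem_closedBall, dist_zero_right]
      refine (pi_norm_le_iff_of_nonneg zero_le_one).mpr fun i => ?_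
      exact (lp.norm_apply_le_norm hp0 x i).trans hx1
    have hφc : φlin c = PittAux.trunc F x := by
      rw [hφlin, PittAux.trunc]
      simp only [LinearMap.coe_mk, AddHom.coe_mk]
      rw [← Finset.sum_attach F (fun i => lp.single p i (x i))]
      refine Finset.sum_congr rfl fun i _ => ?_
      rw [hc_def, he]
      rw [← lp.single_smul, smul_eq_mul, mul_one]
    have hresid : ‖T x - T (φlin c)‖ ≤ ε/2 := by
      rw [← map_sub]
      apply hF
      · rw [hφc]
        exact (PittAux.norm_sub_trunc_le hP F x).trans hx1
      · intro i hi
        rw [hφc]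
        have hcoe : (x - PittAux.trunc F x : lp (fun _ : Γ₁ => 𝕜) p) i
            = x i - PittAux.trunc F x i := by rw [lp.coeFn_sub]; rfl
        rw [hcoe, PittAux.trunc_apply, if_pos hi, sub_self]
    have hmem : T (φlin c) ∈ (fun c => T (φlin c)) '' K := ⟨c, hcK, rfl⟩
    obtain ⟨z, hzt, hz⟩ := Set.mem_iUnion₂.mp (htsub hmem)
    refine Set.mem_iUnion₂.mpr ⟨z, hzt, ?_⟩
    rw [Metric.mem_ball] at hz ⊢
    have h1 : dist (T x) (T (φlin c)) ≤ ε/2 := by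
      rw [dist_eq_norm]; exact hresid
    linarith [dist_triangle (T x) (T (φlin c)) z, h1, hz]
  have hcl : IsCompact (closure (⇑T '' Metric.closedBall 0 1)) :=
    TotallyBounded.isCompact_of_isClosed htb.closure isClosed_closure
  exact (isCompactOperator_iff_isCompact_closure_image_closedBall
    (T : lp (fun _ : Γ₁ => 𝕜) p →ₛₗ[RingHom.id 𝕜] lp (fun _ : Γ₂ => 𝕜) q)
    zero_lt_one).mpr hcl
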